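/- Let p be an odd prime with p ≡ 1 (mod 4). Then for every natural number n ≥ 1 and every natural number q ≥ 0, the norm of the n-th generalized Fibonacci-Lucas quaternion G_n^{p,q} in H_ℚ(−1, p) is nonzero; in particular G_n^{p,q} is invertible in H_ℚ(−1, p). -/

import Mathlib

open scoped Quaternion

/-- The Lucas sequence: `l 0 = 2`, `l 1 = 1`, `l (n+2) = l (n+1) + l n`. -/
def lucas : ℕ → ℕ
  | 0 => 2
  | 1 => 1
  | n + 2 => lucas (n + 1) + lucas n

/-- The generalized Fibonacci-Lucas numbers `g n ^ {p,q} = p * f (n-1) + q * l n` (for `n ≥ 1`). -/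
def g (p q : ℤ) (n : ℕ) : ℤ := p * Nat.fib (n - 1) + q * lucas n

/-- The `n`-th generalized Fibonacci-Lucas quaternion
`G_n^{p,q} = g_n^{p,q} + g_{n+1}^{p,q} i + g_{n+2}^{p,q} j + g_{n+3}^{p,q} k` in `ℍ[ℚ, α, β]`. -/
def G (α β : ℚ) (p q : ℤ) (n : ℕ) : ℍ[ℚ, α, β] :=
  ⟨(g p q n : ℚ), (g p q (n + 1) : ℚ), (g p q (n + 2) : ℚ), (g p q (n + 3) : ℚ)⟩

/-- The norm of a generalized quaternion:
`n(a) = a₁² - α a₂² - β a₃² + α β a₄²`. -/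
def qnorm (α β : ℚ) (a : ℍ[ℚ, α, β]) : ℚ :=
  a.re ^ 2 - α * a.imI ^ 2 - β * a.imJ ^ 2 + α * β * a.imK ^ 2

lemma lucas_mono_two (n : ℕ) : lucas n ≤ lucas (n + 2) := by
  rw [lucas]; omega

lemma g_nonneg (p q : ℤ) (hp : 0 ≤ p) (hq : 0 ≤ q) (n : ℕ) : 0 ≤ g p q n := by
  unfold g; positivity

lemma g_mono_two (p q : ℤ) (hp : 0 ≤ p) (hq : 0 ≤ q) (n : ℕ) (hn : 1 ≤ n) :
    g p q n ≤ g p q (n + 2) := by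
  unfold g
  have h1 : Nat.fib (n - 1) ≤ Nat.fib (n + 2 - 1) := Nat.fib_mono (by omega)
  have h2 : lucas n ≤ lucas (n + 2) := lucas_mono_two n
  have h1' : (Nat.fib (n - 1) : ℤ) ≤ (Nat.fib (n + 2 - 1) : ℤ) := by exact_mod_cast h1
  have h2' : (lucas n : ℤ) ≤ (lucas (n + 2) : ℤ) := by exact_mod_cast h2
  nlinarith

lemma g_ge_p (p q : ℤ) (hp : 0 ≤ p) (hq : 0 ≤ q) (n : ℕ) (hn : 1 ≤ n) :
    p ≤ g p q (n + 2) := by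
  unfold g
  have h1 : 1 ≤ Nat.fib (n + 2 - 1) := Nat.fib_pos.mpr (by omega)
  have h1' : (1 : ℤ) ≤ (Nat.fib (n + 2 - 1) : ℤ) := by exact_mod_cast h1
  have h2 : (0 : ℤ) ≤ (lucas (n + 2) : ℤ) := by positivity
  nlinarith

theorem norm_ne_zero_of_prime_one_mod_four (p : ℕ) (hp : Nat.Prime p) (hodd : Odd p)
    (hp4 : p % 4 = 1) (n : ℕ) (hn : 1 ≤ n) (q : ℕ) :
    qnorm (-1) (p : ℚ) (G (-1) (p : ℚ) (p : ℤ) (q : ℤ) n) ≠ 0 ∧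
    IsUnit (G (-1) (p : ℚ) (p : ℤ) (q : ℤ) n) := by
  have hp2 : 2 ≤ p := hp.two_le
  have hp5 : 5 ≤ p := by omega
  have hpz : (5 : ℤ) ≤ (p : ℤ) := by exact_mod_cast hp5
  have hpnn : (0 : ℤ) ≤ (p : ℤ) := by positivity
  have hqnn : (0 : ℤ) ≤ (q : ℤ) := by positivity
  set a := g (p : ℤ) (q : ℤ) n with ha
  set b := g (p : ℤ) (q : ℤ) (n + 1) with hb
  set c := g (p : ℤ) (q : ℤ) (n + 2) with hc
  set d := g (p : ℤ) (q : ℤ) (n + 3) with hd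
  have h0a : 0 ≤ a := g_nonneg _ _ hpnn hqnn n
  have h0b : 0 ≤ b := g_nonneg _ _ hpnn hqnn (n + 1)
  have hac : a ≤ c := g_mono_two _ _ hpnn hqnn n hn
  have hbd : b ≤ d := by
    have := g_mono_two (p : ℤ) (q : ℤ) hpnn hqnn (n + 1) (by omega)
    simpa using this
  have hpc : (p : ℤ) ≤ c := g_ge_p _ _ hpnn hqnn n hn
  have hpd : (p : ℤ) ≤ d := by
    have := g_ge_p (p : ℤ) (q : ℤ) hpnn hqnn (n + 1) (by omega)
    simpa using this
  have key : a ^ 2 + b ^ 2 - (p : ℤ) * c ^ 2 - (p : ℤ) * d ^ 2 < 0 := by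
    nlinarith [sq_nonneg c, sq_nonneg d, mul_le_mul hac hac h0a (h0a.trans hac),
      mul_le_mul hbd hbd h0b (h0b.trans hbd)]
  have hqval : qnorm (-1) (p : ℚ) (G (-1) (p : ℚ) (p : ℤ) (q : ℤ) n) =
      ((a ^ 2 + b ^ 2 - (p : ℤ) * c ^ 2 - (p : ℤ) * d ^ 2 : ℤ) : ℚ) := by
    simp only [qnorm, G, ← ha, ← hb, ← hc, ← hd]
    push_cast
    ring
  have hne : qnorm (-1) (p : ℚ) (G (-1) (p : ℚ) (p : ℤ) (q : ℤ) n) ≠ 0 := by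
    rw [hqval]
    intro h
    have : a ^ 2 + b ^ 2 - (p : ℤ) * c ^ 2 - (p : ℤ) * d ^ 2 = 0 := by exact_mod_cast h
    omega
  refine ⟨hne, ?_⟩
  set N : ℚ := qnorm (-1) (p : ℚ) (G (-1) (p : ℚ) (p : ℤ) (q : ℤ) n) with hN
  have hmul : G (-1) (p : ℚ) (p : ℤ) (q : ℤ) n * star (G (-1) (p : ℚ) (p : ℤ) (q : ℤ) n)
      = (N : ℍ[ℚ, -1, (p : ℚ)]) := by
    rw [QuaternionAlgebra.mul_star_eq_coe]
    congr 1
    rw [hN]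
    simp only [qnorm, QuaternionAlgebra.re_mul, QuaternionAlgebra.re_star,
      QuaternionAlgebra.imI_star, QuaternionAlgebra.imJ_star, QuaternionAlgebra.imK_star]
    ring
  have hNu : IsUnit (N : ℍ[ℚ, -1, (p : ℚ)]) := by
    rw [← QuaternionAlgebra.coe_algebraMap]
    exact (isUnit_iff_ne_zero.mpr hne).map (algebraMap ℚ _)
  refine isUnit_iff_exists.mpr ⟨N⁻¹ • star (G (-1) (p : ℚ) (p : ℤ) (q : ℤ) n), ?_, ?_⟩
  · rw [mul_smul_comm, hmul, Algebra.smul_def, QuaternionAlgebra.coe_algebraMap,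
      ← QuaternionAlgebra.coe_mul, inv_mul_cancel₀ hne, QuaternionAlgebra.coe_one]
  · rw [smul_mul_assoc, star_comm_self', hmul, Algebra.smul_def,
      QuaternionAlgebra.coe_algebraMap, ← QuaternionAlgebra.coe_mul,
      inv_mul_cancel₀ hne, QuaternionAlgebra.coe_one]
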